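/- Let O be a complete discrete valuation ring with uniformizer ϖ, and let M be a torsion O-module such that M[ϖ^n] has finite length for all n. If M is not of bounded exponent, then M contains a nonzero divisible O-submodule. Moreover, the maximal divisible submodule of M is nonzero. -/

import Mathlib

/-- Let `R` be a complete discrete valuation ring with uniformizer `ϖ`, and
let `M` be a torsion `R`-module such that `M[ϖ^n]` has finite length for all `n`.  If `M` is
not of bounded exponent, then `M` contains a nonzero divisible `R`-submodule; moreover the
maximal divisible submodule (the sup of all divisible submodules) of `M` is nonzero. -/
theorem exists_divisible_submodule_of_unbounded_exponent
    (R : Type*) [CommRing R] [IsDomain R] [IsDiscreteValuationRing R]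
    [IsAdicComplete (IsLocalRing.maximalIdeal R) R]
    (ϖ : R) (hϖ : Irreducible ϖ)
    (M : Type*) [AddCommGroup M] [Module R M]
    (htor : ∀ x : M, ∃ n : ℕ, ϖ ^ n • x = 0)
    (hlen : ∀ n : ℕ, IsFiniteLength R ↥(Submodule.torsionBy R M (ϖ ^ n)))
    (hunbdd : ∀ n : ℕ, ∃ x : M, ϖ ^ n • x ≠ 0) :
    (∃ D : Submodule R M, D ≠ ⊥ ∧ ∀ x ∈ D, ∃ y ∈ D, ϖ • y = x)
    ∧ sSup {D : Submodule R M | ∀ x ∈ D, ∃ y ∈ D, ϖ • y = x} ≠ ⊥ := by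
  classical
  -- `P n` is the submodule `ϖ^n • M`.
  set P : ℕ → Submodule R M := fun n => LinearMap.range (ϖ ^ n • (LinearMap.id : M →ₗ[R] M))
    with hPdef
  have hPmem : ∀ (n : ℕ) (x : M), x ∈ P n ↔ ∃ z : M, ϖ ^ n • z = x := by
    intro n x
    simp [hPdef, LinearMap.mem_range]
  have hPanti : ∀ {n m : ℕ}, n ≤ m → P m ≤ P n := by
    intro n m hnm x hx
    rw [hPmem] at hx ⊢
    obtain ⟨z, hz⟩ := hx
    exact ⟨ϖ ^ (m - n) • z, by rw [smul_smul, ← pow_add, Nat.add_sub_cancel' hnm, hz]⟩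
  set T := Submodule.torsionBy R M ϖ with hTdef
  have hT : IsFiniteLength R ↥T := by
    have := hlen 1; rwa [pow_one] at this
  have hart : IsArtinian R ↥T := (isFiniteLength_iff_isNoetherian_isArtinian.mp hT).2
  set f : ℕ → Submodule R ↥T := fun n => (P n).comap T.subtype with hfdef
  obtain ⟨N, hN⟩ := IsArtinian.monotone_stabilizes (R := R) (M := ↥T)
    ⟨fun n => OrderDual.toDual (f n), fun n m h => Submodule.comap_mono (hPanti h)⟩
  have hNstab : ∀ m, N ≤ m → f N = f m := fun m hm => hN m hm
  -- a nonzero ϖ-torsion element in all `P n`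
  obtain ⟨x, hx⟩ := hunbdd N
  have hex : ∃ k, ϖ ^ k • x = 0 := htor x
  set k := Nat.find hex with hkdef
  have hk0 : ϖ ^ k • x = 0 := Nat.find_spec hex
  have hkN : N < k := by
    by_contra h
    push_neg at h
    exact hx (by
      have : ϖ ^ N • x = ϖ ^ (N - k) • ϖ ^ k • x := by
        rw [smul_smul, ← pow_add, Nat.sub_add_cancel h]
      rw [this, hk0, smul_zero])
  set a : M := ϖ ^ (k - 1) • x with hadef
  have hane : a ≠ 0 := Nat.find_min hex (by omega)
  have haT : ϖ • a = 0 := by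
    rw [hadef, smul_smul, ← pow_succ', Nat.sub_add_cancel (by omega)]
    exact hk0
  have haTmem : a ∈ T := (Submodule.mem_torsionBy_iff _ _).mpr haT
  have haPN : a ∈ P N := hPanti (by omega) ((hPmem (k - 1) a).mpr ⟨x, rfl⟩)
  have haPn : ∀ n, a ∈ P n := by
    intro n
    rcases le_total n N with h | h
    · exact hPanti h haPN
    · have : (⟨a, haTmem⟩ : ↥T) ∈ f N := haPN
      rw [hNstab n h] at this
      exact this
  -- the divisible submodule
  set D : Submodule R M := ⨅ n, P n with hDdef
  have haD : a ∈ D := Submodule.mem_iInf _ |>.mpr haPn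
  have hdiv : ∀ x ∈ D, ∃ y ∈ D, ϖ • y = x := by
    intro x hxD
    rw [hDdef, Submodule.mem_iInf] at hxD
    obtain ⟨z, hz⟩ := (hPmem (N + 1) x).mp (hxD (N + 1))
    refine ⟨ϖ ^ N • z, ?_, by rw [smul_smul, ← pow_succ', hz]⟩
    rw [hDdef, Submodule.mem_iInf]
    intro n
    rcases le_total n N with h | h
    · exact hPanti h ((hPmem N _).mpr ⟨z, rfl⟩)
    · -- n ≥ N
      obtain ⟨z', hz'⟩ := (hPmem (n + 1) x).mp (hxD (n + 1))
      have hy' : ϖ ^ n • z' ∈ P n := (hPmem n _).mpr ⟨z', rfl⟩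
      have hdT : ϖ ^ N • z - ϖ ^ n • z' ∈ T := by
        refine (Submodule.mem_torsionBy_iff _ _).mpr ?_
        have h1 : ϖ • ϖ ^ N • z = x := by rw [smul_smul, ← pow_succ', hz]
        have h2 : ϖ • ϖ ^ n • z' = x := by rw [smul_smul, ← pow_succ', hz']
        show ϖ • (ϖ ^ N • z - ϖ ^ n • z') = 0
        rw [smul_sub, h1, h2, sub_self]
      have hdPN : ϖ ^ N • z - ϖ ^ n • z' ∈ P N :=
        Submodule.sub_mem _ ((hPmem N _).mpr ⟨z, rfl⟩) (hPanti h hy')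
      have : (⟨_, hdT⟩ : ↥T) ∈ f N := hdPN
      rw [hNstab n h] at this
      have hdPn : ϖ ^ N • z - ϖ ^ n • z' ∈ P n := this
      have := Submodule.add_mem _ hy' hdPn
      rwa [add_sub_cancel] at this
  have hDne : D ≠ ⊥ := by
    intro h
    rw [h, Submodule.mem_bot] at haD
    exact hane haD
  refine ⟨⟨D, hDne, hdiv⟩, ?_⟩
  intro h
  have hle : D ≤ sSup {D : Submodule R M | ∀ x ∈ D, ∃ y ∈ D, ϖ • y = x} := le_sSup hdiv
  rw [h, le_bot_iff] at hle
  exact hDne hle
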